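/- Let X be a reflexive real Banach space with a normalized 1-symmetric basis (e_n), and let f ∈ L¹(0,1). Then lim_{ε→0} sup{ τ(Q,f) : Q a finite partition of [0,1] into intervals each of length ≤ ε } = 0, where τ(Q,f) = ‖Σ_j (∫_{I_j} f dμ) e_j‖_X for Q = {I_j}. In particular the indefinite integral F(t) = ∫_0^t f dμ belongs to V_X^0. -/

import Mathlib

open MeasureTheory

noncomputable section

/-- `e` is a normalized 1-symmetric (Schauder) basis of `X`: each `e n` has norm one,
its linear span is dense, and the norm of finite linear combinations is invariant under
permutations of the indices and changes of signs of the coefficients. -/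
def IsSymmetricBasis {X : Type*} [NormedAddCommGroup X] [NormedSpace ℝ X] (e : ℕ → X) : Prop :=
  (∀ n, ‖e n‖ = 1) ∧
  Dense (Submodule.span ℝ (Set.range e) : Set X) ∧
  ∀ (a : ℕ →₀ ℝ) (π : Equiv.Perm ℕ) (ε : ℕ → ℝ), (∀ n, ε n = 1 ∨ ε n = -1) →
    ‖a.sum fun n c => (ε n * c) • e (π n)‖ = ‖a.sum fun n c => c • e n‖

namespace SymmBasisAux

variable {X : Type*} [NormedAddCommGroup X] [NormedSpace ℝ X] {e : ℕ → X}

theorem symm_norm_eq (he : IsSymmetricBasis e) (s : Finset ℕ) (a : ℕ → ℝ)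
    (π : Equiv.Perm ℕ) (ε : ℕ → ℝ) (hε : ∀ n, ε n = 1 ∨ ε n = -1) :
    ‖∑ i ∈ s, (ε i * a i) • e (π i)‖ = ‖∑ i ∈ s, a i • e i‖ := by
  classical
  set a0 : ℕ →₀ ℝ := Finsupp.onFinset s (fun i => if i ∈ s then a i else 0)
    (by intro i h; by_contra hi; simp [hi] at h) with ha0
  have key := he.2.2 a0 π ε hε
  have h1 : a0.sum (fun n c => c • e n) = ∑ i ∈ s, a i • e i := by
    rw [Finsupp.sum_of_support_subset a0 Finsupp.support_onFinset_subset _ (by intros; simp)]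
    refine Finset.sum_congr rfl fun i hi => ?_
    simp [ha0, Finsupp.onFinset_apply, hi]
  have h2 : a0.sum (fun n c => (ε n * c) • e (π n)) = ∑ i ∈ s, (ε i * a i) • e (π i) := by
    rw [Finsupp.sum_of_support_subset a0 Finsupp.support_onFinset_subset _ (by intros; simp)]
    refine Finset.sum_congr rfl fun i hi => ?_
    simp [ha0, Finsupp.onFinset_apply, hi]
  rw [← h1, ← h2, key]

theorem perm_abs_norm_eq (he : IsSymmetricBasis e) (s : Finset ℕ) (a : ℕ → ℝ)
    (π : Equiv.Perm ℕ) :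
    ‖∑ i ∈ s, |a i| • e (π i)‖ = ‖∑ i ∈ s, a i • e i‖ := by
  have := symm_norm_eq he s a π (fun i => if a i < 0 then -1 else 1)
    (fun i => by split_ifs <;> simp)
  rw [← this]
  congr 1
  refine Finset.sum_congr rfl fun i _ => ?_
  split_ifs with h
  · rw [abs_of_neg h]; ring
  · rw [abs_of_nonneg (not_lt.1 h)]; ring

theorem perm_norm_eq (he : IsSymmetricBasis e) (s : Finset ℕ) (a : ℕ → ℝ)
    (π : Equiv.Perm ℕ) :
    ‖∑ i ∈ s, a i • e (π i)‖ = ‖∑ i ∈ s, a i • e i‖ := by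
  have h1 := symm_norm_eq he s a π (fun _ => 1) (fun _ => Or.inl rfl)
  simpa using h1

theorem abs_norm_eq (he : IsSymmetricBasis e) (s : Finset ℕ) (a : ℕ → ℝ) :
    ‖∑ i ∈ s, |a i| • e i‖ = ‖∑ i ∈ s, a i • e i‖ := by
  simpa using perm_abs_norm_eq he s a (Equiv.refl ℕ)

theorem norm_erase_le (he : IsSymmetricBasis e) (s : Finset ℕ) (a : ℕ → ℝ) (j : ℕ) :
    ‖∑ i ∈ s.erase j, a i • e i‖ ≤ ‖∑ i ∈ s, a i • e i‖ := by
  classical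
  set ε : ℕ → ℝ := fun i => if i = j then -1 else 1 with hεdef
  have hε : ∀ n, ε n = 1 ∨ ε n = -1 := fun n => by
    by_cases h : n = j <;> simp [hεdef, h]
  have hkey := symm_norm_eq he s a (Equiv.refl ℕ) ε hε
  simp only [Equiv.refl_apply] at hkey
  have hid : (2:ℝ) • ∑ i ∈ s.erase j, a i • e i
      = ∑ i ∈ s, a i • e i + ∑ i ∈ s, (ε i * a i) • e i := by
    rw [← Finset.sum_add_distrib]
    have h2 : ∑ i ∈ s, (a i • e i + (ε i * a i) • e i)
        = ∑ i ∈ s, ((1 + ε i) * a i) • e i :=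
      Finset.sum_congr rfl fun i _ => by rw [add_mul, one_mul, add_smul]
    have h3 : ∑ i ∈ s, ((1 + ε i) * a i) • e i
        = ∑ i ∈ s.erase j, ((1 + ε i) * a i) • e i := by
      refine (Finset.sum_subset (Finset.erase_subset j s) fun x hx hxe => ?_).symm
      have hxj : x = j := by
        by_contra h
        exact hxe (Finset.mem_erase.2 ⟨h, hx⟩)
      simp [hεdef, hxj]
    have h4 : ∑ i ∈ s.erase j, ((1 + ε i) * a i) • e i
        = ∑ i ∈ s.erase j, (2:ℝ) • (a i • e i) := by
      refine Finset.sum_congr rfl fun i hi => ?_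
      have hij : i ≠ j := (Finset.mem_erase.1 hi).1
      rw [smul_smul]
      norm_num [hεdef, hij]
    rw [h2, h3, h4, ← Finset.smul_sum]
  have : ‖(2:ℝ) • ∑ i ∈ s.erase j, a i • e i‖ ≤ 2 * ‖∑ i ∈ s, a i • e i‖ := by
    rw [hid]
    calc ‖∑ i ∈ s, a i • e i + ∑ i ∈ s, (ε i * a i) • e i‖
        ≤ ‖∑ i ∈ s, a i • e i‖ + ‖∑ i ∈ s, (ε i * a i) • e i‖ := norm_add_le _ _
      _ = 2 * ‖∑ i ∈ s, a i • e i‖ := by rw [hkey]; ring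
  rw [norm_smul] at this
  simp only [Real.norm_ofNat] at this
  linarith

theorem norm_subset_le (he : IsSymmetricBasis e) {t s : Finset ℕ} (hts : t ⊆ s) (a : ℕ → ℝ) :
    ‖∑ i ∈ t, a i • e i‖ ≤ ‖∑ i ∈ s, a i • e i‖ := by
  classical
  have main : ∀ u : Finset ℕ, ‖∑ i ∈ t, a i • e i‖ ≤ ‖∑ i ∈ t ∪ u, a i • e i‖ := by
    intro u
    induction u using Finset.induction_on with
    | empty => simp
    | @insert j u hj ih =>
      by_cases hju : j ∈ t ∪ u
      · rwa [Finset.union_insert, Finset.insert_eq_self.2 hju]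
      · rw [Finset.union_insert]
        refine ih.trans ?_
        have herase : (insert j (t ∪ u)).erase j = t ∪ u := by
          rw [Finset.erase_insert hju]
        calc ‖∑ i ∈ t ∪ u, a i • e i‖
            = ‖∑ i ∈ (insert j (t ∪ u)).erase j, a i • e i‖ := by rw [herase]
          _ ≤ ‖∑ i ∈ insert j (t ∪ u), a i • e i‖ := norm_erase_le he _ a j
  have := main s
  rwa [Finset.union_eq_right.2 hts] at this

theorem abs_coeff_le (he : IsSymmetricBasis e) {s : Finset ℕ} {k : ℕ} (hk : k ∈ s) (a : ℕ → ℝ) :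
    |a k| ≤ ‖∑ i ∈ s, a i • e i‖ := by
  have h1 := norm_subset_le he (Finset.singleton_subset_iff.2 hk) a
  rw [Finset.sum_singleton, norm_smul, he.1 k, mul_one] at h1
  simpa using h1


def rotPerm (N m : ℕ) : Equiv.Perm ℕ where
  toFun i := if i < N then i + m else if i < N + m then i - N else i
  invFun i := if i < m then i + N else if i < N + m then i - m else i
  left_inv i := by dsimp only; split_ifs <;> omega
  right_inv i := by dsimp only; split_ifs <;> omega


theorem norm_shift_eq (he : IsSymmetricBasis e) (N m : ℕ) :
    ‖∑ i ∈ Finset.range N, e (i + m)‖ = ‖∑ i ∈ Finset.range N, e i‖ := by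
  have h := perm_norm_eq he (Finset.range N) (fun _ => (1:ℝ)) (rotPerm N m)
  simp only [one_smul] at h
  rw [← h]
  congr 1
  refine Finset.sum_congr rfl fun i hi => ?_
  have : rotPerm N m i = i + m := by
    simp [rotPerm, Equiv.coe_fn_mk, Finset.mem_range.1 hi]
  rw [this]

theorem norm_range_add_le (he : IsSymmetricBasis e) (m N : ℕ) :
    ‖∑ i ∈ Finset.range (m + N), e i‖
      ≤ ‖∑ i ∈ Finset.range m, e i‖ + ‖∑ i ∈ Finset.range N, e i‖ := by
  rw [Finset.sum_range_add]
  refine (norm_add_le _ _).trans ?_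
  gcongr
  have : ∑ i ∈ Finset.range N, e (m + i) = ∑ i ∈ Finset.range N, e (i + m) := by
    refine Finset.sum_congr rfl fun i _ => by rw [add_comm]
  rw [this, norm_shift_eq he]

theorem norm_range_mul_le (he : IsSymmetricBasis e) (k N : ℕ) :
    ‖∑ i ∈ Finset.range (k * N), e i‖ ≤ k * ‖∑ i ∈ Finset.range N, e i‖ := by
  induction k with
  | zero => simp
  | succ k ih =>
    have : (k + 1) * N = k * N + N := by ring
    rw [this]
    refine (norm_range_add_le he (k * N) N).trans ?_
    push_cast
    linarith

theorem norm_range_mono (he : IsSymmetricBasis e) {m N : ℕ} (h : m ≤ N) :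
    ‖∑ i ∈ Finset.range m, e i‖ ≤ ‖∑ i ∈ Finset.range N, e i‖ := by
  have := norm_subset_le he (Finset.range_subset_range.2 h) (fun _ => (1:ℝ))
  simpa using this

/-- `s m ≤ (m/N + 1) * s N`. -/
theorem norm_range_interp (he : IsSymmetricBasis e) (m N : ℕ) (hN : 1 ≤ N) :
    ‖∑ i ∈ Finset.range m, e i‖
      ≤ ((m : ℝ) / N + 1) * ‖∑ i ∈ Finset.range N, e i‖ := by
  have h1 : m ≤ (m / N + 1) * N := by
    have := Nat.div_add_mod m N
    have h2 : m % N < N := Nat.mod_lt _ hN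
    nlinarith [Nat.div_add_mod m N]
  calc ‖∑ i ∈ Finset.range m, e i‖
      ≤ ‖∑ i ∈ Finset.range ((m / N + 1) * N), e i‖ := norm_range_mono he h1
    _ ≤ ((m / N + 1 : ℕ) : ℝ) * ‖∑ i ∈ Finset.range N, e i‖ := norm_range_mul_le he _ N
    _ ≤ ((m : ℝ) / N + 1) * ‖∑ i ∈ Finset.range N, e i‖ := by
        have hcast : ((m / N + 1 : ℕ) : ℝ) ≤ (m : ℝ) / N + 1 := by
          push_cast
          have := Nat.cast_div_le (m := m) (n := N) (α := ℝ)
          linarith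
        exact mul_le_mul_of_nonneg_right hcast (norm_nonneg _)

/-- Abel summation identity. -/
theorem abel_identity (b : ℕ → ℝ) (n : ℕ) :
    ∑ i ∈ Finset.range n, b i • e i
      = (∑ k ∈ Finset.range n, (b k - b (k + 1)) • (∑ i ∈ Finset.range (k + 1), e i))
        + b n • ∑ i ∈ Finset.range n, e i := by
  induction n with
  | zero => simp
  | succ n ih =>
    rw [Finset.sum_range_succ, ih, Finset.sum_range_succ (fun k => (b k - b (k+1)) • _)]
    rw [Finset.sum_range_succ (f := e)]
    rw [sub_smul, smul_add]
    abel

theorem weighted_telescope (b : ℕ → ℝ) (n : ℕ) :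
    ∑ k ∈ Finset.range n, (b k - b (k + 1)) * (k + 1)
      = (∑ i ∈ Finset.range n, b i) - n * b n := by
  induction n with
  | zero => simp
  | succ n ih =>
    rw [Finset.sum_range_succ, ih, Finset.sum_range_succ (f := b)]
    push_cast
    ring

/-- Abel-summation interpolation bound. -/
theorem abel_bound (he : IsSymmetricBasis e) (b : ℕ → ℝ) (n N : ℕ) (hN : 1 ≤ N)
    (hmono : ∀ k, b (k + 1) ≤ b k) (hpos : ∀ k, 0 ≤ b k) (hn : b n = 0)
    {δ M : ℝ} (hδ : b 0 ≤ δ) (hM : ∑ i ∈ Finset.range n, b i ≤ M) :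
    ‖∑ i ∈ Finset.range n, b i • e i‖
      ≤ (M / N + δ) * ‖∑ i ∈ Finset.range N, e i‖ := by
  set sN := ‖∑ i ∈ Finset.range N, e i‖ with hsN
  have hsN0 : 0 ≤ sN := norm_nonneg _
  have key : ‖∑ i ∈ Finset.range n, b i • e i‖
      ≤ ∑ k ∈ Finset.range n, (b k - b (k + 1)) * (((k + 1 : ℕ) : ℝ) / N + 1) * sN := by
    rw [abel_identity b n, hn, zero_smul, add_zero]
    refine (norm_sum_le _ _).trans ?_
    refine Finset.sum_le_sum fun k _ => ?_
    rw [norm_smul, Real.norm_eq_abs, abs_of_nonneg (by linarith [hmono k])]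
    rw [mul_assoc]
    refine mul_le_mul_of_nonneg_left ?_ (by linarith [hmono k])
    exact norm_range_interp he (k + 1) N hN
  refine key.trans ?_
  have expand : ∑ k ∈ Finset.range n, (b k - b (k + 1)) * (((k + 1 : ℕ) : ℝ) / N + 1) * sN
      = ((∑ k ∈ Finset.range n, (b k - b (k + 1)) * ((k : ℝ) + 1)) / N
        + ∑ k ∈ Finset.range n, (b k - b (k + 1))) * sN := by
    rw [← Finset.sum_mul]
    congr 1
    rw [Finset.sum_div, ← Finset.sum_add_distrib]
    refine Finset.sum_congr rfl fun k _ => ?_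
    push_cast
    ring
  rw [expand]
  refine mul_le_mul_of_nonneg_right ?_ hsN0
  have h1 : ∑ k ∈ Finset.range n, (b k - b (k + 1)) * ((k : ℝ) + 1)
      = (∑ i ∈ Finset.range n, b i) - n * b n := by
    rw [← weighted_telescope b n]
  have h2 : ∑ k ∈ Finset.range n, (b k - b (k + 1)) = b 0 - b n :=
    Finset.sum_range_sub' b n
  rw [h1, h2, hn]
  have hNpos : (0:ℝ) < N := by exact_mod_cast hN
  have hdiv : (∑ i ∈ Finset.range n, b i) / N ≤ M / N := by gcongr
  have hmul : (n : ℝ) * 0 = 0 := by ring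
  rw [hmul, sub_zero]
  linarith


/-- sorted rearrangement of `|a|`. -/
theorem exists_sorted (he : IsSymmetricBasis e) (n : ℕ) (a : Fin n → ℝ) :
    ∃ b : ℕ → ℝ, (∀ k, b (k + 1) ≤ b k) ∧ (∀ k, 0 ≤ b k) ∧ b n = 0 ∧
      (∀ k, b k = 0 ∨ ∃ i : Fin n, b k = |a i|) ∧
      (∑ i ∈ Finset.range n, b i = ∑ i : Fin n, |a i|) ∧
      ‖∑ i ∈ Finset.range n, b i • e i‖ = ‖∑ i : Fin n, a i • e (i : ℕ)‖ := by
  classical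
  set g : Fin n → ℝ := fun i => -|a i| with hg
  set σ : Equiv.Perm (Fin n) := Tuple.sort g with hσ
  have hmono : Monotone (g ∘ σ) := Tuple.monotone_sort g
  set b : ℕ → ℝ := fun k => if h : k < n then |a (σ ⟨k, h⟩)| else 0 with hb
  have hbval : ∀ k (h : k < n), b k = |a (σ ⟨k, h⟩)| := fun k h => by simp [hb, h]
  have hb0 : ∀ k, 0 ≤ b k := by
    intro k
    by_cases h : k < n
    · rw [hbval k h]; exact abs_nonneg _
    · simp [hb, h]
  have hbmono : ∀ k, b (k + 1) ≤ b k := by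
    intro k
    by_cases h1 : k + 1 < n
    · have h0 : k < n := by omega
      rw [hbval _ h1, hbval _ h0]
      have := hmono (show (⟨k, h0⟩ : Fin n) ≤ ⟨k + 1, h1⟩ by simp [Fin.mk_le_mk])
      simp only [Function.comp_apply, hg] at this
      linarith
    · have : b (k + 1) = 0 := by simp [hb, h1]
      rw [this]; exact hb0 k
  have hbn : b n = 0 := by simp [hb]
  have hrange : ∀ (F : ℝ → X), (∑ k ∈ Finset.range n, F (b k)) = ∑ k : Fin n, F (|a (σ k)|) := by
    intro F
    rw [← Fin.sum_univ_eq_sum_range (fun k => F (b k)) n]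
    exact Finset.sum_congr rfl fun k _ => by rw [hbval k k.isLt]
  refine ⟨b, hbmono, hb0, hbn, ?_, ?_, ?_⟩
  · intro k
    by_cases h : k < n
    · exact Or.inr ⟨σ ⟨k, h⟩, hbval k h⟩
    · exact Or.inl (by simp [hb, h])
  · -- sum equality
    rw [← Fin.sum_univ_eq_sum_range (fun k => b k) n]
    rw [show ∑ k : Fin n, b ↑k = ∑ k : Fin n, |a (σ k)| from
      Finset.sum_congr rfl fun k _ => by rw [hbval k k.isLt]]
    exact Equiv.sum_comp σ (fun i => |a i|)
  · -- norm equality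
    set c : ℕ → ℝ := fun j => if h : j < n then a ⟨j, h⟩ else 0 with hc
    have hRHS : ∑ i : Fin n, a i • e (i : ℕ) = ∑ j ∈ Finset.range n, c j • e j := by
      rw [← Fin.sum_univ_eq_sum_range (fun j => c j • e j) n]
      exact Finset.sum_congr rfl fun i _ => by simp [hc, i.isLt]
    set π : Equiv.Perm ℕ := (σ⁻¹ : Equiv.Perm (Fin n)).extendDomain
      (Fin.equivSubtype (n := n)) with hπ
    have hperm := perm_abs_norm_eq he (Finset.range n) c π
    have hLHS : ∑ j ∈ Finset.range n, |c j| • e (π j)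
        = ∑ k ∈ Finset.range n, b k • e k := by
      rw [← Fin.sum_univ_eq_sum_range (fun j => |c j| • e (π j)) n,
        ← Fin.sum_univ_eq_sum_range (fun k => b k • e k) n]
      have hstep : ∀ j : Fin n, |c (j : ℕ)| • e (π (j : ℕ))
          = |a j| • e ((σ⁻¹ j : Fin n) : ℕ) := by
        intro j
        have h1 : |c (j : ℕ)| = |a j| := by simp [hc, j.isLt]
        have h2 : π (j : ℕ) = ((σ⁻¹ j : Fin n) : ℕ) := by
          have := Equiv.Perm.extendDomain_apply_subtype (σ⁻¹ : Equiv.Perm (Fin n))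
            (Fin.equivSubtype (n := n)) (b := (j : ℕ)) (j.isLt)
          simp only [hπ, this]
          simp [Fin.equivSubtype]
        rw [h1, h2]
      rw [show ∑ j : Fin n, |c (j:ℕ)| • e (π (j:ℕ))
          = ∑ j : Fin n, |a j| • e ((σ⁻¹ j : Fin n) : ℕ) from
        Finset.sum_congr rfl fun j _ => hstep j]
      rw [← Equiv.sum_comp σ (fun j => |a j| • e ((σ⁻¹ j : Fin n) : ℕ))]
      refine Finset.sum_congr rfl fun k _ => ?_
      rw [hbval _ k.isLt]
      simp
    rw [hRHS, ← hperm, hLHS]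


set_option maxHeartbeats 1000000 in
theorem small_average [CompleteSpace X]
    (hrefl : Function.Surjective (NormedSpace.inclusionInDoubleDual ℝ X))
    (he : IsSymmetricBasis e) {θ : ℝ} (hθ : 0 < θ) :
    ∃ N₀ : ℕ, 1 ≤ N₀ ∧ ∀ N, N₀ ≤ N →
      ‖∑ i ∈ Finset.range N, e i‖ ≤ θ * N := by
  classical
  -- linear independence
  have hli : LinearIndependent ℝ e := by
    rw [linearIndependent_iff']
    intro s g hsum i hi
    have h1 := abs_coeff_le he hi g
    rw [hsum, norm_zero] at h1
    exact abs_eq_zero.1 (le_antisymm h1 (abs_nonneg _))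
  set p : Submodule ℝ X := Submodule.span ℝ (Set.range e) with hp
  -- coordinate functionals on the span are bounded
  have hcoordb : ∀ (k : ℕ) (y : p), ‖((Finsupp.lapply k).comp hli.repr) y‖ ≤ 1 * ‖y‖ := by
    intro k y
    simp only [LinearMap.comp_apply, Finsupp.lapply_apply, one_mul, Real.norm_eq_abs]
    have hy : (y : X) = ∑ i ∈ (hli.repr y).support, (hli.repr y) i • e i := by
      conv_lhs => rw [← hli.linearCombination_repr y]
      rw [Finsupp.linearCombination_apply, Finsupp.sum]
    by_cases hk : k ∈ (hli.repr y).support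
    · have h2 := abs_coeff_le he hk (hli.repr y)
      rw [← hy] at h2
      exact h2
    · rw [Finsupp.notMem_support_iff.1 hk]
      simpa using norm_nonneg y
  -- extend them to all of X
  choose E hE _ using fun k => exists_extension_norm_eq p
    (LinearMap.mkContinuous ((Finsupp.lapply k).comp hli.repr) 1 (hcoordb k))
  have hEcoord : ∀ (k : ℕ) (y : p), E k y = hli.repr y k := by
    intro k y
    rw [hE k y]
    rfl
  have hEe : ∀ k i : ℕ, k ≠ i → E k (e i) = 0 := by
    intro k i hki
    have hmem : e i ∈ p := Submodule.subset_span (Set.mem_range_self i)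
    have h1 : E k (e i) = hli.repr ⟨e i, hmem⟩ k := hEcoord k ⟨e i, hmem⟩
    rw [h1, hli.repr_eq_single i ⟨e i, hmem⟩ rfl, Finsupp.single_apply, if_neg (by omega)]
  -- the "projection" bound
  have hPle : ∀ (N : ℕ) (z : X), ‖∑ k ∈ Finset.range N, (E k z) • e k‖ ≤ ‖z‖ := by
    intro N
    have hclosed : IsClosed {z : X | ‖∑ k ∈ Finset.range N, (E k z) • e k‖ ≤ ‖z‖} := by
      refine isClosed_le ?_ continuous_norm
      exact (continuous_finset_sum _ fun k _ => ((E k).continuous.smul continuous_const)).norm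
    have hspan : (p : Set X) ⊆ {z : X | ‖∑ k ∈ Finset.range N, (E k z) • e k‖ ≤ ‖z‖} := by
      intro z hz
      set y : p := ⟨z, hz⟩ with hydef
      set cc := hli.repr y with hcc
      have hval : ∀ k, E k z = cc k := fun k => hEcoord k y
      have hy : z = ∑ i ∈ cc.support, cc i • e i := by
        conv_lhs => rw [show z = (y : X) from rfl, ← hli.linearCombination_repr y]
        rw [Finsupp.linearCombination_apply, Finsupp.sum]
      have hrw : ∑ k ∈ Finset.range N, (E k z) • e k
          = ∑ k ∈ Finset.range N ∩ cc.support, cc k • e k := by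
        rw [show ∑ k ∈ Finset.range N, (E k z) • e k = ∑ k ∈ Finset.range N, cc k • e k from
          Finset.sum_congr rfl fun k _ => by rw [hval]]
        refine (Finset.sum_subset Finset.inter_subset_left fun x hx hxn => ?_).symm
        have : x ∉ cc.support := fun hmem => hxn (Finset.mem_inter.2 ⟨hx, hmem⟩)
        rw [Finsupp.notMem_support_iff.1 this, zero_smul]
      show ‖∑ k ∈ Finset.range N, (E k z) • e k‖ ≤ ‖z‖
      rw [hrw]
      calc ‖∑ k ∈ Finset.range N ∩ cc.support, cc k • e k‖
          ≤ ‖∑ k ∈ cc.support, cc k • e k‖ := norm_subset_le he Finset.inter_subset_right cc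
        _ = ‖z‖ := by rw [← hy]
    intro z
    have hdense := he.2.1
    have : z ∈ closure (p : Set X) := by
      rw [hdense.closure_eq]; trivial
    exact closure_minimal hspan hclosed this
  -- coordinates determine elements
  have hzero_of_coords : ∀ x : X, (∀ k, E k x = 0) → x = 0 := by
    intro x hx
    have key : ∀ δ : ℝ, 0 < δ → ‖x‖ ≤ 2 * δ := by
      intro δ hδ
      obtain ⟨y, hyp, hxy⟩ := he.2.1.exists_dist_lt x hδ
      set yy : p := ⟨y, hyp⟩ with hyy
      set cc := hli.repr yy with hcc
      set N := (cc.support.sup id) + 1 with hN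
      have hsupp : cc.support ⊆ Finset.range N := fun i hi =>
        Finset.mem_range.2 (Nat.lt_succ_of_le (Finset.le_sup (f := id) hi))
      have hPy : ∑ k ∈ Finset.range N, (E k y) • e k = y := by
        rw [show ∑ k ∈ Finset.range N, (E k y) • e k = ∑ k ∈ Finset.range N, cc k • e k from
          Finset.sum_congr rfl fun k _ => by rw [hEcoord k yy]]
        rw [← Finset.sum_subset hsupp (fun x _ hxn => by
          rw [Finsupp.notMem_support_iff.1 hxn, zero_smul])]
        conv_rhs => rw [show y = (yy : X) from rfl, ← hli.linearCombination_repr yy]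
        rw [Finsupp.linearCombination_apply, Finsupp.sum]
      have hPx : ∑ k ∈ Finset.range N, (E k x) • e k = 0 := by
        simp [hx]
      have hxrep : x = (x - y) + ∑ k ∈ Finset.range N, (E k (y - x)) • e k := by
        have : ∑ k ∈ Finset.range N, (E k (y - x)) • e k
            = ∑ k ∈ Finset.range N, (E k y) • e k - ∑ k ∈ Finset.range N, (E k x) • e k := by
          rw [← Finset.sum_sub_distrib]
          exact Finset.sum_congr rfl fun k _ => by rw [map_sub, sub_smul]
        rw [this, hPy, hPx, sub_zero]
        abel
      calc ‖x‖ = ‖(x - y) + ∑ k ∈ Finset.range N, (E k (y - x)) • e k‖ := by rw [← hxrep]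
        _ ≤ ‖x - y‖ + ‖∑ k ∈ Finset.range N, (E k (y - x)) • e k‖ := norm_add_le _ _
        _ ≤ ‖x - y‖ + ‖y - x‖ := by gcongr; exact hPle N (y - x)
        _ = dist x y + dist x y := by rw [dist_eq_norm, norm_sub_rev]
        _ ≤ 2 * δ := by linarith
    by_contra hx0
    have hpos : 0 < ‖x‖ := norm_pos_iff.2 hx0
    have := key (‖x‖ / 4) (by linarith)
    linarith
  -- weak compactness and a cluster point of (e n)
  set ι := NormedSpace.inclusionInDoubleDual ℝ X with hι
  have ιnorm : ∀ x : X, ‖ι x‖ = ‖x‖ := fun x =>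
    (NormedSpace.inclusionInDoubleDualLi ℝ (E := X)).norm_map x
  have ιinj : Function.Injective ι := by
    intro x y hxy
    have h1 : ‖x - y‖ = 0 := by rw [← ιnorm, map_sub, hxy, sub_self]; exact ContinuousLinearMap.opNorm_zero
    exact sub_eq_zero.1 (norm_eq_zero.1 h1)
  set ιe : X ≃ StrongDual ℝ (StrongDual ℝ X) :=
    Equiv.ofBijective ι ⟨ιinj, hrefl⟩ with hιe
  set K : Set (WeakDual ℝ (StrongDual ℝ X)) :=
    WeakDual.toStrongDual ⁻¹' Metric.closedBall 0 1 with hK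
  have hKcomp : IsCompact K := WeakDual.isCompact_closedBall (𝕜 := ℝ) (E := StrongDual ℝ X) 0 1
  set G : WeakDual ℝ (StrongDual ℝ X) → WeakSpace ℝ X :=
    fun φ => toWeakSpace ℝ X (ιe.symm (WeakDual.toStrongDual φ)) with hG
  have hGcont : Continuous G := by
    apply WeakBilin.continuous_of_continuous_eval
    intro l
    have hfun : (fun φ : WeakDual ℝ (StrongDual ℝ X) =>
        ((topDualPairing ℝ X).flip (G φ)) l) = fun φ => WeakDual.toStrongDual φ l := by
      funext φ
      show l (ιe.symm (WeakDual.toStrongDual φ)) = WeakDual.toStrongDual φ l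
      conv_rhs => rw [← ιe.apply_symm_apply (WeakDual.toStrongDual φ)]
      rfl
    rw [hfun]
    exact WeakDual.eval_continuous l
  set S : Set (WeakSpace ℝ X) := G '' K with hS
  have hScomp : IsCompact S := hKcomp.image hGcont
  set u : ℕ → WeakSpace ℝ X := fun n => toWeakSpace ℝ X (e n) with hu
  have hmem : ∀ n, u n ∈ S := by
    intro n
    refine ⟨WeakDual.toStrongDual.symm (ι (e n)), ?_, ?_⟩
    · show WeakDual.toStrongDual (WeakDual.toStrongDual.symm (ι (e n))) ∈ Metric.closedBall 0 1
      rw [LinearEquiv.apply_symm_apply]; exact Metric.mem_closedBall.2 ((dist_zero_right (ι (e n))).trans_le ((ιnorm _).trans_le (he.1 n).le))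
    · show toWeakSpace ℝ X (ιe.symm (WeakDual.toStrongDual (WeakDual.toStrongDual.symm (ι (e n))))) = u n
      rw [LinearEquiv.apply_symm_apply]
      have : ιe.symm (ι (e n)) = e n := ιe.symm_apply_apply (e n)
      rw [this]
  have hFle : Filter.map u Filter.atTop ≤ Filter.principal S := by
    rw [Filter.le_principal_iff, Filter.mem_map]
    exact Filter.Eventually.of_forall hmem
  obtain ⟨x, hxS, hxcl⟩ := hScomp.exists_clusterPt hFle
  set x' : X := (toWeakSpace ℝ X).symm x with hx'
  have hcluster : ∀ (h : StrongDual ℝ X) (δ : ℝ), 0 < δ →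
      ∃ᶠ n in Filter.atTop, |h (e n) - h x'| < δ := by
    intro h δ hδ
    have hcont : Continuous fun y : WeakSpace ℝ X => ((topDualPairing ℝ X).flip y) h :=
      WeakBilin.eval_continuous _ h
    have hUopen : IsOpen {y : WeakSpace ℝ X | |((topDualPairing ℝ X).flip y) h - h x'| < δ} :=
      isOpen_lt ((hcont.sub continuous_const).abs) continuous_const
    have hUmem : x ∈ {y : WeakSpace ℝ X | |((topDualPairing ℝ X).flip y) h - h x'| < δ} := by
      show |h x' - h x'| < δ
      rw [sub_self, abs_zero]; exact hδ
    have hfreq := (mapClusterPt_iff_frequently.1 hxcl) _ (hUopen.mem_nhds hUmem)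
    exact hfreq.mono fun n hn => hn
  have hx0 : x' = 0 := by
    refine hzero_of_coords x' fun k => ?_
    by_contra hk
    have hδ : 0 < |E k x'| := abs_pos.2 hk
    obtain ⟨n, hn, hlt⟩ := Filter.frequently_atTop.1 (hcluster (E k) _ hδ) (k + 1)
    rw [hEe k n (by omega), zero_sub, abs_neg] at hlt
    exact lt_irrefl _ hlt
  -- separation: 0 is in the closure of the convex hull of the basis vectors
  have h0mem : (0 : X) ∈ closure (convexHull ℝ (Set.range e)) := by
    by_contra h0
    obtain ⟨ff, uu, hfu, hub⟩ := geometric_hahn_banach_point_closed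
      ((convex_convexHull ℝ _).closure) isClosed_closure h0
    rw [map_zero] at hfu
    obtain ⟨n, -, hn⟩ := Filter.frequently_atTop.1 (hcluster ff uu hfu) 0
    rw [hx0, map_zero, sub_zero] at hn
    have h1 : uu < ff (e n) := hub _ (subset_closure (subset_convexHull ℝ _ (Set.mem_range_self n)))
    have h2 : ff (e n) ≤ |ff (e n)| := le_abs_self _
    linarith
  -- extract a convex combination of small norm
  obtain ⟨z, hz, hznorm⟩ : ∃ z ∈ convexHull ℝ (Set.range e), ‖z‖ < θ := by
    obtain ⟨z, hz, hd⟩ := Metric.mem_closure_iff.1 h0mem θ hθ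
    exact ⟨z, hz, by rwa [dist_zero_left] at hd⟩
  rw [convexHull_eq] at hz
  obtain ⟨ι', t, w, zf, hw0, hw1, hzf, hcm⟩ := hz
  set gg : ι' → ℕ := fun i => if hi : i ∈ t then (hzf i hi).choose else 0 with hgg
  have hggval : ∀ i ∈ t, e (gg i) = zf i := by
    intro i hi
    simp only [hgg, dif_pos hi]
    exact (hzf i hi).choose_spec
  have hzrep : z = ∑ i ∈ t, w i • e (gg i) := by
    rw [← hcm, Finset.centerMass_eq_of_sum_1 _ _ hw1]
    exact Finset.sum_congr rfl fun i hi => by rw [hggval i hi]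
  set A := t.image gg with hA
  set lam : ℕ → ℝ := fun j => ∑ i ∈ t.filter (fun i => gg i = j), w i with hlam
  have hmaps : ∀ i ∈ t, gg i ∈ A := fun i hi => Finset.mem_image_of_mem gg hi
  have hlamsum : ∑ j ∈ A, lam j = 1 := by
    rw [hlam, Finset.sum_fiberwise_of_maps_to hmaps, hw1]
  have hzlam : z = ∑ j ∈ A, lam j • e j := by
    rw [hzrep, ← Finset.sum_fiberwise_of_maps_to hmaps (fun i => w i • e (gg i))]
    refine Finset.sum_congr rfl fun j _ => ?_
    rw [hlam]
    rw [Finset.sum_smul]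
    refine Finset.sum_congr rfl fun i hi => ?_
    rw [(Finset.mem_filter.1 hi).2]
  have hAne : A.Nonempty := by
    rcases Finset.eq_empty_or_nonempty A with hAe | hAne
    · rw [hAe, Finset.sum_empty] at hlamsum
      exact absurd hlamsum.symm one_ne_zero
    · exact hAne
  refine ⟨A.max' hAne + 1, by omega, fun N hN => ?_⟩
  have hjlt : ∀ j ∈ A, j < N := fun j hj =>
    lt_of_lt_of_le (Nat.lt_succ_of_le (A.le_max' j hj)) hN
  have hNpos : 0 < N := by
    have := hjlt _ (A.max'_mem hAne)
    omega
  haveI : NeZero N := ⟨hNpos.ne'⟩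
  set π : Fin N → Equiv.Perm ℕ := fun r =>
    (Equiv.addLeft r).extendDomain (Fin.equivSubtype (n := N)) with hπ
  have hπval : ∀ (r : Fin N) (j : ℕ) (hj : j < N), π r j = ((r + ⟨j, hj⟩ : Fin N) : ℕ) := by
    intro r j hj
    have h1 := Equiv.Perm.extendDomain_apply_subtype (Equiv.addLeft r)
      (Fin.equivSubtype (n := N)) (b := j) hj
    rw [hπ] at *
    rw [h1]
    simp [Fin.equivSubtype, Equiv.addLeft]
  have hsum : ∑ r : Fin N, ∑ j ∈ A, lam j • e (π r j) = ∑ i ∈ Finset.range N, e i := by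
    rw [Finset.sum_comm]
    have hinner : ∀ j ∈ A, ∑ r : Fin N, lam j • e (π r j)
        = lam j • ∑ i ∈ Finset.range N, e i := by
      intro j hj
      rw [← Finset.smul_sum]
      congr 1
      have hjN := hjlt j hj
      rw [show ∑ r : Fin N, e (π r j) = ∑ r : Fin N, e ((r + (⟨j, hjN⟩ : Fin N) : Fin N) : ℕ) from
        Finset.sum_congr rfl fun r _ => by rw [hπval r j hjN]]
      rw [show ∑ r : Fin N, e ((r + (⟨j, hjN⟩ : Fin N) : Fin N) : ℕ)
          = ∑ y : Fin N, e (y : ℕ) from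
        Equiv.sum_comp (Equiv.addRight (⟨j, hjN⟩ : Fin N)) (fun y : Fin N => e (y : ℕ))]
      exact Fin.sum_univ_eq_sum_range (fun i => e i) N
    rw [Finset.sum_congr rfl hinner, ← Finset.sum_smul, hlamsum, one_smul]
  have hnormz : ∀ r : Fin N, ‖∑ j ∈ A, lam j • e (π r j)‖ = ‖z‖ := by
    intro r
    rw [perm_norm_eq he A lam (π r), ← hzlam]
  calc ‖∑ i ∈ Finset.range N, e i‖ = ‖∑ r : Fin N, ∑ j ∈ A, lam j • e (π r j)‖ := by rw [hsum]
    _ ≤ ∑ r : Fin N, ‖∑ j ∈ A, lam j • e (π r j)‖ := norm_sum_le _ _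
    _ = ∑ r : Fin N, ‖z‖ := Finset.sum_congr rfl fun r _ => hnormz r
    _ = N * ‖z‖ := by rw [Finset.sum_const, Finset.card_univ, Fintype.card_fin, nsmul_eq_mul]
    _ ≤ N * θ := by
        have : (0:ℝ) ≤ N := Nat.cast_nonneg N
        nlinarith [hznorm]
    _ = θ * N := mul_comm _ _


theorem abs_cont {f : ℝ → ℝ} (hf : IntegrableOn f (Set.Ioo (0:ℝ) 1)) {δ : ℝ} (hδ : 0 < δ) :
    ∃ ε > (0:ℝ), ∀ a b : ℝ, 0 ≤ a → b ≤ 1 → b - a ≤ ε →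
      (∫ x in Set.Ioo a b, |f x|) ≤ δ := by
  have hG : Integrable ((Set.Ioo (0:ℝ) 1).indicator f) volume :=
    hf.integrable_indicator measurableSet_Ioo
  have hfin : (∫⁻ x, ‖(Set.Ioo (0:ℝ) 1).indicator f x‖₊ ∂volume) ≠ ⊤ := hG.2.ne
  obtain ⟨α, hα0, hα⟩ := exists_pos_setLIntegral_lt_of_measure_lt hfin
    (ε := ENNReal.ofReal δ) (ENNReal.ofReal_pos.2 hδ).ne'
  set c : ℝ := (min α 1).toReal with hc
  have hmin_ne_top : min α 1 ≠ ⊤ := ne_top_of_le_ne_top ENNReal.one_ne_top (min_le_right _ _)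
  have hc0 : 0 < c := ENNReal.toReal_pos (by intro h; rcases min_eq_iff.1 h with ⟨h1,-⟩|⟨h1,-⟩ <;> simp_all) hmin_ne_top
  refine ⟨c / 2, by positivity, fun a b ha hb hlen => ?_⟩
  have hsub : Set.Ioo a b ⊆ Set.Ioo (0:ℝ) 1 := fun x hx =>
    ⟨lt_of_le_of_lt ha hx.1, lt_of_lt_of_le hx.2 hb⟩
  have hI : IntegrableOn f (Set.Ioo a b) volume := hf.mono_set hsub
  have heq : (∫ x in Set.Ioo a b, |f x|)
      = (∫⁻ x in Set.Ioo a b, ENNReal.ofReal |f x|).toReal :=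
    integral_eq_lintegral_of_nonneg_ae (Filter.Eventually.of_forall fun x => abs_nonneg _)
      hI.abs.aestronglyMeasurable
  have hl : (∫⁻ x in Set.Ioo a b, ENNReal.ofReal |f x|)
      = ∫⁻ x in Set.Ioo a b, ‖(Set.Ioo (0:ℝ) 1).indicator f x‖₊ := by
    refine setLIntegral_congr_fun measurableSet_Ioo (fun x hx => ?_)
    rw [Set.indicator_of_mem (hsub hx), ← Real.norm_eq_abs]; exact ofReal_norm _
  have hvlt : volume (Set.Ioo a b) < α := by
    rw [Real.volume_Ioo]
    calc ENNReal.ofReal (b - a) ≤ ENNReal.ofReal (c / 2) := ENNReal.ofReal_le_ofReal hlen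
      _ < ENNReal.ofReal c := by
          rw [ENNReal.ofReal_lt_ofReal_iff hc0]
          linarith
      _ = min α 1 := ENNReal.ofReal_toReal hmin_ne_top
      _ ≤ α := min_le_left _ _
  have hle := hα _ hvlt
  rw [heq, hl]
  exact ENNReal.toReal_le_of_le_ofReal hδ.le hle.le


theorem interp_bound (he : IsSymmetricBasis e) {n N : ℕ} (hN : 1 ≤ N) (a : Fin n → ℝ)
    {δ M : ℝ} (hδ0 : 0 ≤ δ) (hδ : ∀ i, |a i| ≤ δ) (hM : ∑ i : Fin n, |a i| ≤ M) :
    ‖∑ i : Fin n, a i • e (i : ℕ)‖ ≤ (M / N + δ) * ‖∑ i ∈ Finset.range N, e i‖ := by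
  obtain ⟨b, hmono, hpos, hn, hval, hsum, hnorm⟩ := exists_sorted he n a
  rw [← hnorm]
  refine abel_bound he b n N hN hmono hpos hn ?_ (by rw [hsum]; exact hM)
  rcases hval 0 with h | ⟨i, h⟩
  · rw [h]; exact hδ0
  · rw [h]; exact hδ i


end SymmBasisAux

/-- For `X` reflexive with a normalized 1-symmetric basis and
`f ∈ L¹(0,1)`, the supremum of `τ(Q,f) = ‖Σ_i (∫_{I_i} f dμ) e_i‖` over partitions `Q`
of `[0,1]` into intervals of length at most `ε` tends to `0` as `ε → 0`; in particular
the indefinite integral of `f` belongs to `V_X^0`. -/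
theorem small_mesh_variation_tendsto_zero
    {X : Type*} [NormedAddCommGroup X] [NormedSpace ℝ X] [CompleteSpace X]
    (hrefl : Function.Surjective (NormedSpace.inclusionInDoubleDual ℝ X))
    (e : ℕ → X) (he : IsSymmetricBasis e)
    (f : ℝ → ℝ) (hf : IntegrableOn f (Set.Ioo (0 : ℝ) 1)) :
    ∀ η > (0 : ℝ), ∃ ε > (0 : ℝ), ∀ (n : ℕ) (t : Fin (n + 1) → ℝ),
      StrictMono t → t 0 = 0 → t (Fin.last n) = 1 →
      (∀ i : Fin n, t i.succ - t i.castSucc ≤ ε) →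
      ‖∑ i : Fin n, (∫ x in Set.Ioo (t i.castSucc) (t i.succ), f x) • e (i : ℕ)‖ ≤ η := by
  intro η hη
  set M : ℝ := ∫ x in Set.Ioo (0:ℝ) 1, |f x| with hMdef
  have hM0 : 0 ≤ M := integral_nonneg fun x => abs_nonneg _
  have hθ : 0 < η / (2 * (M + 1)) := by positivity
  obtain ⟨N, hN1, havg⟩ := SymmBasisAux.small_average hrefl he hθ
  set sN : ℝ := ‖∑ i ∈ Finset.range N, e i‖ with hsNdef
  have hsNle : sN ≤ (η / (2 * (M + 1))) * N := havg N le_rfl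
  have hsN1 : (1:ℝ) ≤ sN := by
    have h := SymmBasisAux.norm_subset_le he (t := {0}) (s := Finset.range N)
      (Finset.singleton_subset_iff.2 (Finset.mem_range.2 (by omega))) (fun _ => (1:ℝ))
    rw [Finset.sum_singleton, one_smul, he.1 0] at h
    calc (1:ℝ) ≤ ‖∑ i ∈ Finset.range N, (1:ℝ) • e i‖ := h
      _ = sN := by simp [hsNdef]
  have hsN0 : (0:ℝ) < sN := lt_of_lt_of_le one_pos hsN1
  set δ : ℝ := η / (2 * sN) with hδdef
  have hδ0 : 0 < δ := by positivity
  obtain ⟨ε, hε0, hεprop⟩ := SymmBasisAux.abs_cont hf hδ0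
  refine ⟨ε, hε0, ?_⟩
  intro n t hmono h0 h1 hmesh
  have ht0 : ∀ i : Fin (n+1), 0 ≤ t i := fun i => by
    have := hmono.monotone (Fin.zero_le i); rwa [h0] at this
  have ht1 : ∀ i : Fin (n+1), t i ≤ 1 := fun i => by
    have := hmono.monotone (Fin.le_last i); rwa [h1] at this
  set a : Fin n → ℝ := fun i => ∫ x in Set.Ioo (t i.castSucc) (t i.succ), f x with hadef
  have habs : ∀ i : Fin n, |a i| ≤ ∫ x in Set.Ioo (t i.castSucc) (t i.succ), |f x| := by
    intro i
    have h := norm_integral_le_integral_norm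
      (μ := volume.restrict (Set.Ioo (t i.castSucc) (t i.succ))) f
    simpa [Real.norm_eq_abs, hadef] using h
  have hδi : ∀ i : Fin n, (∫ x in Set.Ioo (t i.castSucc) (t i.succ), |f x|) ≤ δ := fun i =>
    hεprop _ _ (ht0 _) (ht1 _) (hmesh i)
  have hai : ∀ i, |a i| ≤ δ := fun i => (habs i).trans (hδi i)
  have hsub : ∀ i : Fin n, Set.Ioo (t i.castSucc) (t i.succ) ⊆ Set.Ioo (0:ℝ) 1 := fun i x hx =>
    ⟨lt_of_le_of_lt (ht0 _) hx.1, lt_of_lt_of_le hx.2 (ht1 _)⟩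
  have hIint : ∀ i : Fin n,
      IntegrableOn (fun x => |f x|) (Set.Ioo (t i.castSucc) (t i.succ)) volume := fun i =>
    (hf.mono_set (hsub i)).abs
  have hdisj : Set.Pairwise ↑(Finset.univ : Finset (Fin n))
      (Function.onFun Disjoint fun i : Fin n => Set.Ioo (t i.castSucc) (t i.succ)) := by
    intro i _ j _ hij
    rcases lt_or_gt_of_ne hij with hlt | hlt
    · have hle : t i.succ ≤ t j.castSucc := hmono.monotone (by
        show (i.succ : Fin (n+1)) ≤ j.castSucc
        rw [Fin.le_def]
        simp only [Fin.val_succ, Fin.coe_castSucc]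
        exact hlt)
      refine Set.Ioo_disjoint_Ioo.2 ?_
      exact le_trans (min_le_left _ _) (le_trans hle (le_max_right _ _))
    · have hle : t j.succ ≤ t i.castSucc := hmono.monotone (by
        show (j.succ : Fin (n+1)) ≤ i.castSucc
        rw [Fin.le_def]
        simp only [Fin.val_succ, Fin.coe_castSucc]
        exact hlt)
      refine Set.Ioo_disjoint_Ioo.2 ?_
      exact le_trans (min_le_right _ _) (le_trans hle (le_max_left _ _))
  have hsumabs : ∑ i : Fin n, (∫ x in Set.Ioo (t i.castSucc) (t i.succ), |f x|) ≤ M := by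
    rw [← integral_biUnion_finset Finset.univ (fun i _ => measurableSet_Ioo) hdisj
      (fun i _ => hIint i)]
    refine setIntegral_mono_set hf.abs
      (Filter.Eventually.of_forall fun x => abs_nonneg _)
      (HasSubset.Subset.eventuallyLE ?_)
    exact Set.iUnion₂_subset fun i _ => hsub i
  have haM : ∑ i : Fin n, |a i| ≤ M :=
    le_trans (Finset.sum_le_sum fun i _ => habs i) hsumabs
  have hbound := SymmBasisAux.interp_bound he hN1 a hδ0.le hai haM
  rw [← hsNdef] at hbound
  refine hbound.trans ?_
  have hN0R : (0:ℝ) < N := by exact_mod_cast hN1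
  have h1 : (M / N + δ) * sN = M * sN / N + δ * sN := by ring
  have h2 : M * sN / N ≤ M * (η / (2 * (M + 1))) := by
    rw [div_le_iff₀ hN0R]
    nlinarith [hsNle, hM0]
  have h3 : δ * sN = η / 2 := by
    rw [hδdef]
    field_simp
  have hq : (η / (2 * (M + 1))) * (2 * (M + 1)) = η :=
    div_mul_cancel₀ _ (by positivity)
  have h4 : M * (η / (2 * (M + 1))) ≤ η / 2 := by nlinarith [hθ.le, hM0]
  linarith

end
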